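/- The number of parking functions of length n is (n+1)^(n-1). -/

import Mathlib

/-- A parking function of length `n`: a sequence of positive integers whose
nondecreasing rearrangement `b` satisfies `b i ≤ i` (1-indexed). -/
def IsParkingFunction {n : ℕ} (a : Fin n → ℕ) : Prop :=
  (∀ i, 1 ≤ a i) ∧
    ∃ σ : Equiv.Perm (Fin n), Monotone (a ∘ σ) ∧ ∀ i : Fin n, a (σ i) ≤ (i : ℕ) + 1

open Finset

namespace ParkingAux

lemma card_filter_val_lt {n k : ℕ} (hk : k ≤ n) :
    (Finset.univ.filter (fun i : Fin n => (i : ℕ) < k)).card = k := by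
  rw [← Fintype.card_subtype]
  have e : {i : Fin n // (i : ℕ) < k} ≃ Fin k :=
    { toFun := fun i => ⟨i.1, i.2⟩
      invFun := fun j => ⟨⟨j.1, lt_of_lt_of_le j.2 hk⟩, j.2⟩
      left_inv := fun i => rfl
      right_inv := fun j => rfl }
  rw [Fintype.card_congr e, Fintype.card_fin]

/-- Counting characterization of parking functions. -/
lemma isPF_iff {n : ℕ} (a : Fin n → ℕ) :
    IsParkingFunction a ↔ (∀ i, 1 ≤ a i) ∧
      ∀ k, 1 ≤ k → k ≤ n → k ≤ (Finset.univ.filter (fun i => a i ≤ k)).card := by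
  constructor
  · rintro ⟨hpos, σ, hmono, hle⟩
    refine ⟨hpos, fun k hk1 hkn => ?_⟩
    calc k = (Finset.univ.filter (fun i : Fin n => (i : ℕ) < k)).card :=
          (card_filter_val_lt hkn).symm
      _ ≤ _ := by
          apply Finset.card_le_card_of_injOn σ
          · intro i hi
            simp only [Finset.mem_coe, Finset.mem_filter, Finset.mem_univ, true_and] at hi ⊢
            have := hle i
            omega
          · exact fun x _ y _ h => σ.injective h
  · rintro ⟨hpos, hcount⟩
    refine ⟨hpos, Tuple.sort a, Tuple.monotone_sort a, fun i => ?_⟩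
    by_contra h
    push_neg at h
    have hk : (i : ℕ) + 1 ≤ n := i.2
    have h1 := hcount ((i : ℕ) + 1) (by omega) hk
    have hsub : (Finset.univ.filter (fun j : Fin n => a j ≤ (i : ℕ) + 1)).card ≤
        (Finset.univ.filter (fun j : Fin n => (j : ℕ) < (i : ℕ))).card := by
      apply Finset.card_le_card_of_injOn (Tuple.sort a).symm
      · intro j hj
        simp only [Finset.mem_coe, Finset.mem_filter, Finset.mem_univ, true_and] at hj ⊢
        by_contra hge
        push_neg at hge
        have hle' : i ≤ (Tuple.sort a).symm j := by
          rw [Fin.le_def]; exact hge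
        have hm := Tuple.monotone_sort a hle'
        simp only [Function.comp_apply, Equiv.apply_symm_apply] at hm
        omega
      · exact fun x _ y _ hxy => (Tuple.sort a).symm.injective hxy
    have h2 : (Finset.univ.filter (fun j : Fin n => (j : ℕ) < (i : ℕ))).card = (i : ℕ) :=
      card_filter_val_lt (le_of_lt i.2)
    omega

lemma isPF_le {n : ℕ} {a : Fin n → ℕ} (h : IsParkingFunction a) (i : Fin n) : a i ≤ n := by
  obtain ⟨-, σ, -, hle⟩ := h
  have := hle (σ.symm i)
  simp only [Equiv.apply_symm_apply] at this
  have := (σ.symm i).2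
  omega

section CycleLemma

variable {n : ℕ} (f : Fin n → ZMod (n + 1))

lemma zmod_eq_cast_iff {m t : ℕ} [NeZero m] (x : ZMod m) (ht : t < m) :
    x = (t : ZMod m) ↔ x.val = t := by
  constructor
  · rintro rfl; exact ZMod.val_cast_of_lt ht
  · rintro rfl; exact (ZMod.natCast_rightInverse x).symm

/-- Number of cars preferring residue `t`. -/
def cnt (t : ℕ) : ℕ := (Finset.univ.filter (fun i : Fin n => f i = (t : ZMod (n + 1)))).card

/-- Prefix sums of `cnt`. -/
def A (q : ℕ) : ℕ := ∑ t ∈ Finset.range q, cnt f t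

lemma cnt_add (t : ℕ) : cnt f (t + (n + 1)) = cnt f t := by
  unfold cnt
  congr 1
  apply Finset.filter_congr
  intro i _
  have : ((t + (n + 1) : ℕ) : ZMod (n + 1)) = (t : ZMod (n + 1)) := by
    push_cast
    simp
  rw [this]

lemma A_period : A f (n + 1) = n := by
  have h := Finset.card_eq_sum_card_fiberwise
    (f := fun i : Fin n => (f i).val) (s := Finset.univ) (t := Finset.range (n + 1))
    (fun i _ => Finset.mem_range.mpr (ZMod.val_lt _))
  rw [Finset.card_univ, Fintype.card_fin] at h
  rw [A]
  have he : ∀ t ∈ Finset.range (n + 1), cnt f t =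
      (Finset.univ.filter (fun i : Fin n => (f i).val = t)).card := by
    intro t ht
    rw [Finset.mem_range] at ht
    unfold cnt
    congr 1
    apply Finset.filter_congr
    intro i _
    exact zmod_eq_cast_iff (f i) ht
  rw [Finset.sum_congr rfl he, ← h]

lemma A_succ (q : ℕ) : A f (q + 1) = A f q + cnt f q :=
  Finset.sum_range_succ _ _

lemma A_add (q : ℕ) : A f (q + (n + 1)) = A f q + n := by
  induction q with
  | zero => simpa [A] using A_period f
  | succ q ih =>
    have e1 : q + 1 + (n + 1) = (q + (n + 1)) + 1 := by omega
    rw [e1, A_succ, ih, A_succ, cnt_add]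
    omega

/-- Integer-valued shifted prefix sums. -/
def S (q : ℕ) : ℤ := (A f q : ℤ) - q

lemma S_add (q : ℕ) : S f (q + (n + 1)) = S f q - 1 := by
  unfold S
  rw [A_add]
  push_cast
  ring

lemma card_window (j k : ℕ) (hk : k ≤ n + 1) :
    A f j + (Finset.univ.filter
      (fun i : Fin n => (f i - (j : ZMod (n + 1))).val < k)).card = A f (j + k) := by
  have hA : A f (j + k) = A f j + ∑ t ∈ Finset.Ico j (j + k), cnt f t := by
    rw [A, A, Finset.range_eq_Ico, Finset.range_eq_Ico]
    exact (Finset.sum_Ico_consecutive (cnt f) (Nat.zero_le j) (Nat.le_add_right j k)).symm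
  have hcard : (Finset.univ.filter
      (fun i : Fin n => (f i - (j : ZMod (n + 1))).val < k)).card =
      ∑ t ∈ Finset.Ico j (j + k), cnt f t := by
    rw [Finset.card_eq_sum_card_fiberwise
      (f := fun i : Fin n => j + (f i - (j : ZMod (n + 1))).val)
      (t := Finset.Ico j (j + k)) ?_]
    · apply Finset.sum_congr rfl
      intro t ht
      rw [Finset.mem_Ico] at ht
      unfold cnt
      congr 1
      ext i
      simp only [Finset.mem_filter, Finset.mem_univ, true_and]
      constructor
      · rintro ⟨hlt, heq⟩
        have hval : (f i - (j : ZMod (n + 1))).val = t - j := by omega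
        have hlt' : t - j < n + 1 := by omega
        have : f i - (j : ZMod (n + 1)) = ((t - j : ℕ) : ZMod (n + 1)) :=
          (zmod_eq_cast_iff _ hlt').mpr hval
        have : f i = ((t - j : ℕ) : ZMod (n + 1)) + (j : ZMod (n + 1)) := by
          rw [← this]; ring
        rw [this, ← Nat.cast_add]
        congr 1
        omega
      · intro hfi
        rw [hfi]
        have hsub : ((t : ZMod (n + 1)) - (j : ZMod (n + 1))) = ((t - j : ℕ) : ZMod (n + 1)) := by
          rw [Nat.cast_sub ht.1]
        have hlt' : t - j < n + 1 := by omega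
        rw [hsub, ZMod.val_cast_of_lt hlt']
        omega
    · intro i hi
      simp only [Finset.mem_coe, Finset.mem_filter, Finset.mem_univ, true_and] at hi ⊢
      rw [Finset.mem_Ico]
      exact ⟨Nat.le_add_right _ _, Nat.add_lt_add_left hi j⟩
  omega

/-- The condition that starting the circle at position `j` yields a parking function. -/
def Cond (j : ℕ) : Prop := ∀ k, 1 ≤ k → k ≤ n → S f j ≤ S f (j + k)

lemma isPF_shift_iff (j : ℕ) :
    IsParkingFunction (fun i => (f i - (j : ZMod (n + 1))).val + 1) ↔ Cond f j := by
  rw [isPF_iff]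
  constructor
  · rintro ⟨-, hcount⟩
    intro k hk1 hkn
    have h1 := hcount k hk1 hkn
    have h2 := card_window f j k (by omega)
    have h3 : (Finset.univ.filter
        (fun i : Fin n => (f i - (j : ZMod (n + 1))).val + 1 ≤ k)).card =
        (Finset.univ.filter
        (fun i : Fin n => (f i - (j : ZMod (n + 1))).val < k)).card := rfl
    rw [h3] at h1
    unfold S
    omega
  · intro hc
    refine ⟨fun i => by omega, fun k hk1 hkn => ?_⟩
    have h1 := hc k hk1 hkn
    have h2 := card_window f j k (by omega)
    have h3 : (Finset.univ.filter
        (fun i : Fin n => (f i - (j : ZMod (n + 1))).val + 1 ≤ k)).card =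
        (Finset.univ.filter
        (fun i : Fin n => (f i - (j : ZMod (n + 1))).val < k)).card := rfl
    rw [h3]
    unfold S at h1
    omega

lemma cond_unique {j₁ j₂ : ℕ} (hlt : j₁ < j₂) (h2 : j₂ < n + 1)
    (hc1 : Cond f j₁) (hc2 : Cond f j₂) : False := by
  set d := j₂ - j₁ with hd
  have hd1 : 1 ≤ d := by omega
  have hdn : d ≤ n := by omega
  have hA := hc1 d hd1 hdn
  have hB := hc2 (n + 1 - d) (by omega) (by omega)
  have e1 : j₁ + d = j₂ := by omega
  have e2 : j₂ + (n + 1 - d) = j₁ + (n + 1) := by omega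
  rw [e1] at hA
  rw [e2, S_add] at hB
  omega

lemma cond_exists : ∃ j, j < n + 1 ∧ Cond f j := by
  have hne : (Finset.range (n + 1)).Nonempty := ⟨0, by simp⟩
  obtain ⟨j₁, hj₁m, hj₁⟩ := Finset.exists_min_image (Finset.range (n + 1)) (S f) hne
  have hex : ∃ j, j < n + 1 ∧ ∀ l, l < n + 1 → S f j ≤ S f l := by
    refine ⟨j₁, Finset.mem_range.mp hj₁m, fun l hl => hj₁ l (Finset.mem_range.mpr hl)⟩
  set j₀ := Nat.find hex with hj₀def
  obtain ⟨hj₀m, hj₀min⟩ := Nat.find_spec hex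
  have hstrict : ∀ l, l < j₀ → S f j₀ < S f l := by
    intro l hl
    have hlm : l < n + 1 := lt_trans hl hj₀m
    have := Nat.find_min hex hl
    push_neg at this
    obtain ⟨l', hl', hlt'⟩ := this hlm
    exact lt_of_le_of_lt (hj₀min l' hl') hlt'
  refine ⟨j₀, hj₀m, fun k hk1 hkn => ?_⟩
  by_cases hcase : j₀ + k < n + 1
  · exact hj₀min _ hcase
  · have hr : j₀ + k = (j₀ + k - (n + 1)) + (n + 1) := by omega
    have hrlt : j₀ + k - (n + 1) < j₀ := by omega
    rw [hr, S_add]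
    have := hstrict _ hrlt
    omega

lemma exists_unique_shift :
    ∃! c : ZMod (n + 1), IsParkingFunction (fun i => (f i + c).val + 1) := by
  obtain ⟨j₀, hj₀m, hc₀⟩ := cond_exists f
  refine ⟨-(j₀ : ZMod (n + 1)), ?_, ?_⟩
  · show IsParkingFunction (fun i => (f i + -(j₀ : ZMod (n + 1))).val + 1)
    have : (fun i => (f i + -(j₀ : ZMod (n + 1))).val + 1) =
        (fun i => (f i - (j₀ : ZMod (n + 1))).val + 1) := by
      funext i; rw [sub_eq_add_neg]
    rw [this, isPF_shift_iff]
    exact hc₀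
  · intro c' hc'
    set j' := (-c').val with hj'def
    have hcj' : c' = -((j' : ℕ) : ZMod (n + 1)) := by
      rw [hj'def]
      rw [ZMod.natCast_rightInverse (-c')]
      ring
    have hj'm : j' < n + 1 := ZMod.val_lt _
    have hcond' : Cond f j' := by
      rw [← isPF_shift_iff]
      have : (fun i => (f i - ((j' : ℕ) : ZMod (n + 1))).val + 1) =
          (fun i => (f i + c').val + 1) := by
        funext i; rw [hcj', sub_eq_add_neg]
      rw [this]
      exact hc'
    have : j' = j₀ := by
      by_contra hne
      rcases lt_or_gt_of_ne hne with h | h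
      · exact cond_unique f h hj₀m hcond' hc₀
      · exact cond_unique f h hj'm hc₀ hcond'
    rw [hcj', this]

end CycleLemma

/-- Parking functions in `ZMod (n+1)` coordinates. -/
def P (n : ℕ) (f : Fin n → ZMod (n + 1)) : Prop :=
  IsParkingFunction (fun i => (f i).val + 1)

noncomputable def equivZMod (n : ℕ) :
    {a : Fin n → ℕ // IsParkingFunction a} ≃ {f : Fin n → ZMod (n + 1) // P n f} where
  toFun := fun ⟨a, h⟩ => ⟨fun i => ((a i - 1 : ℕ) : ZMod (n + 1)), by
    unfold P
    have he : (fun i => (((a i - 1 : ℕ) : ZMod (n + 1))).val + 1) = a := by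
      funext i
      rw [ZMod.val_cast_of_lt (by have := isPF_le h i; omega)]
      have := h.1 i
      omega
    rw [he]
    exact h⟩
  invFun := fun ⟨f, h⟩ => ⟨fun i => (f i).val + 1, h⟩
  left_inv := by
    rintro ⟨a, h⟩
    ext i
    simp only
    rw [ZMod.val_cast_of_lt (by have := isPF_le h i; omega)]
    have := h.1 i
    omega
  right_inv := by
    rintro ⟨f, h⟩
    ext i
    simp only [Nat.add_sub_cancel]
    exact ZMod.natCast_rightInverse (f i)

lemma key (n : ℕ) :
    Nat.card {f : Fin n → ZMod (n + 1) // P n f} * (n + 1) = (n + 1) ^ n := by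
  have hEU : ∀ f : Fin n → ZMod (n + 1), ∃! c, P n (fun i => f i + c) :=
    fun f => exists_unique_shift f
  have hbij : Function.Bijective
      (fun p : {f : Fin n → ZMod (n + 1) // P n f} × ZMod (n + 1) =>
        (fun i => p.1.1 i + p.2 : Fin n → ZMod (n + 1))) := by
    constructor
    · rintro ⟨⟨f₁, h₁⟩, c₁⟩ ⟨⟨f₂, h₂⟩, c₂⟩ heq
      simp only at heq
      have hptw : ∀ i, f₁ i + c₁ = f₂ i + c₂ := fun i => congrFun heq i
      have hf₁ : f₁ = fun i => f₂ i + (c₂ - c₁) := by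
        funext i
        have := hptw i
        linear_combination this
      have huniq := hEU f₂
      obtain ⟨c, -, hun⟩ := huniq
      have e1 : c₂ - c₁ = c := by
        apply hun
        rw [← hf₁]; exact h₁
      have e2 : (0 : ZMod (n + 1)) = c := by
        apply hun
        simpa using h₂
      have hcc : c₁ = c₂ := by
        have : c₂ - c₁ = 0 := by rw [e1, ← e2]
        linear_combination -this
      have hff : f₁ = f₂ := by
        rw [hf₁, hcc]
        funext i; simp
      simp [Prod.ext_iff, Subtype.ext_iff, hff, hcc]
    · intro g
      obtain ⟨c, hc, -⟩ := hEU g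
      refine ⟨⟨⟨fun i => g i + c, hc⟩, -c⟩, ?_⟩
      funext i
      simp
  have hcard := Nat.card_congr (Equiv.ofBijective _ hbij)
  rw [Nat.card_prod] at hcard
  rw [Nat.card_eq_fintype_card (α := ZMod (n + 1)), ZMod.card] at hcard
  rw [Nat.card_eq_fintype_card (α := Fin n → ZMod (n + 1))] at hcard
  rw [hcard]
  simp [ZMod.card]

end ParkingAux

/-- The number of parking functions of length `n` is `(n+1)^(n-1)`. -/
theorem card_parkingFunctions (n : ℕ) :
    Nat.card {a : Fin n → ℕ // IsParkingFunction a} = (n + 1) ^ (n - 1) := by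
  have h1 : Nat.card {a : Fin n → ℕ // IsParkingFunction a} =
      Nat.card {f : Fin n → ZMod (n + 1) // ParkingAux.P n f} :=
    Nat.card_congr (ParkingAux.equivZMod n)
  have h2 := ParkingAux.key n
  rw [h1]
  rcases n with _ | k
  · simpa using h2
  · have e : (k + 1 + 1) ^ (k + 1) = (k + 1 + 1) ^ (k + 1 - 1) * (k + 1 + 1) := by
      rw [Nat.succ_sub_one, pow_succ]
    rw [e] at h2
    exact Nat.eq_of_mul_eq_mul_right (by omega) h2
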